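/- arXiv:1208.1920 — 9 statements merged into one kernel-verified Lean document; each statement's English description precedes it below -/
import Mathlib

section
/- For any odd prime p and any m ∈ ℤ/pℤ, the number of pairs (x, y) ∈ (ℤ/pℤ) × (ℤ/pℤ) satisfying x + y = m, y ≠ p - 1, and y ≥ x (comparing canonical representatives in {0, ..., p-1}) is exactly (p - 1)/2. -/
theorem stmt_1 (p : ℕ) (hp : p.Prime) (hodd : p ≠ 2) [NeZero p] (m : ZMod p) :
    (Finset.univ.filter
      (fun xy : ZMod p × ZMod p =>
        xy.1 + xy.2 = m ∧ xy.2.val < p - 1 ∧ xy.1.val ≤ xy.2.val)).card = (p - 1) / 2 := by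
  classical
  haveI := Fact.mk hp
  have hp3 : 3 ≤ p := by
    have := hp.two_le
    omega
  have h2 : (2 : ZMod p) ≠ 0 := by
    intro h
    have : ((2 : ℕ) : ZMod p) = 0 := by exact_mod_cast h
    rw [ZMod.natCast_eq_zero_iff] at this
    have := Nat.le_of_dvd (by norm_num) this
    omega
  set T : Finset (ZMod p × ZMod p) :=
    Finset.univ.filter (fun xy => xy.1 + xy.2 = m ∧ xy.1.val ≤ xy.2.val) with hT
  set T2 : Finset (ZMod p × ZMod p) :=
    Finset.univ.filter (fun xy => xy.1 + xy.2 = m ∧ xy.2.val ≤ xy.1.val) with hT2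
  set T' : Finset (ZMod p × ZMod p) :=
    Finset.univ.filter (fun xy => xy.1 + xy.2 = m) with hT'
  -- value of -1
  have hvneg : (-1 : ZMod p).val = p - 1 := by
    obtain ⟨n, rfl⟩ := Nat.exists_eq_succ_of_ne_zero (NeZero.ne p)
    simpa using ZMod.val_neg_one n
  -- S = T.erase (m+1, -1)
  have hS : (Finset.univ.filter
      (fun xy : ZMod p × ZMod p =>
        xy.1 + xy.2 = m ∧ xy.2.val < p - 1 ∧ xy.1.val ≤ xy.2.val)) = T.erase (m + 1, -1) := by
    ext ⟨x, y⟩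
    simp only [Finset.mem_filter, Finset.mem_univ, true_and, Finset.mem_erase, hT,
      Prod.mk.injEq, Ne, not_and]
    constructor
    · rintro ⟨h1, h2', h3⟩
      refine ⟨?_, h1, h3⟩
      intro _ hy
      rw [hy, hvneg] at h2'
      omega
    · rintro ⟨hne, h1, h3⟩
      refine ⟨h1, ?_, h3⟩
      have hy : y ≠ -1 := by
        intro hy
        apply hne _ hy
        rw [hy] at h1
        linear_combination h1
      have : y.val ≠ p - 1 := by
        intro h
        apply hy
        exact ZMod.val_injective p (h.trans hvneg.symm)
      have := ZMod.val_lt y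
      omega
  have hmem : (m + 1, -1) ∈ T := by
    simp only [hT, Finset.mem_filter, Finset.mem_univ, true_and]
    constructor
    · ring
    · rw [hvneg]
      have := ZMod.val_lt (m + 1)
      omega
  -- card T' = p
  have hcardT' : T'.card = p := by
    have : T' = (Finset.univ : Finset (ZMod p)).image (fun y => (m - y, y)) := by
      ext ⟨x, y⟩
      simp only [hT', Finset.mem_filter, Finset.mem_univ, true_and, Finset.mem_image,
        Prod.mk.injEq]
      constructor
      · intro h
        exact ⟨y, by linear_combination -h, rfl⟩
      · rintro ⟨a, h1, h2⟩
        subst h2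
        linear_combination -h1
    rw [this, Finset.card_image_of_injective _ (fun a b hab => (Prod.mk.injEq _ _ _ _).mp hab |>.2),
      Finset.card_univ, ZMod.card]
  -- card T2 = card T
  have hcard2 : T2.card = T.card := by
    have : T2 = T.map (Equiv.prodComm (ZMod p) (ZMod p)).toEmbedding := by
      ext ⟨x, y⟩
      simp only [hT, hT2, Finset.mem_map_equiv, Finset.mem_filter, Finset.mem_univ, true_and,
        Equiv.prodComm_symm, Equiv.prodComm_apply, Prod.swap]
      constructor
      · rintro ⟨h1, h3⟩; exact ⟨by rw [add_comm]; exact h1, h3⟩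
      · rintro ⟨h1, h3⟩; exact ⟨by rw [add_comm]; exact h1, h3⟩
    rw [this, Finset.card_map]
  -- union
  have hunion : T ∪ T2 = T' := by
    ext ⟨x, y⟩
    simp only [hT, hT2, hT', Finset.mem_union, Finset.mem_filter, Finset.mem_univ, true_and]
    constructor
    · rintro (⟨h1, _⟩ | ⟨h1, _⟩) <;> exact h1
    · intro h1
      rcases le_total x.val y.val with h | h
      · exact Or.inl ⟨h1, h⟩
      · exact Or.inr ⟨h1, h⟩
  -- intersection is a singleton
  set c : ZMod p := m * (2 : ZMod p)⁻¹ with hc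
  have hcc : c + c = m := by
    have : (2 : ZMod p) * (2 : ZMod p)⁻¹ = 1 := mul_inv_cancel₀ h2
    calc c + c = (2 * (2 : ZMod p)⁻¹) * m := by ring
    _ = m := by rw [this, one_mul]
  have hinter : T ∩ T2 = {(c, c)} := by
    ext ⟨x, y⟩
    simp only [hT, hT2, Finset.mem_inter, Finset.mem_filter, Finset.mem_univ, true_and,
      Finset.mem_singleton, Prod.mk.injEq]
    constructor
    · rintro ⟨⟨h1, h3⟩, ⟨_, h4⟩⟩
      have hxy : x = y := ZMod.val_injective p (le_antisymm h3 h4)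
      subst hxy
      have hx : x = c := by
        have h5 : (2 : ZMod p) * x = 2 * c := by
          rw [two_mul, two_mul, hcc, h1]
        exact mul_left_cancel₀ h2 h5
      exact ⟨hx, hx⟩
    · rintro ⟨h1, h2'⟩
      subst h1; subst h2'
      exact ⟨⟨hcc, le_refl _⟩, ⟨hcc, le_refl _⟩⟩
  have hkey : T.card + T2.card = p + 1 := by
    have := Finset.card_union_add_card_inter T T2
    rw [hunion, hinter, hcardT', Finset.card_singleton] at this
    omega
  rw [hS, Finset.card_erase_of_mem hmem]
  omega
end

section
/- For any odd prime p and any m ∈ ℤ/pℤ, the number of pairs (x, y) ∈ (ℤ/pℤ) × (ℤ/pℤ) satisfying x + y = m, y ≠ p - 1, and y < x (comparing canonical representatives) is exactly (p - 1)/2. -/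
theorem stmt_2 (p : ℕ) (hp : p.Prime) (hodd : p ≠ 2) [NeZero p] (m : ZMod p) :
    (Finset.univ.filter
      (fun xy : ZMod p × ZMod p =>
        xy.1 + xy.2 = m ∧ xy.2.val < p - 1 ∧ xy.2.val < xy.1.val)).card = (p - 1) / 2 := by
  haveI : Fact p.Prime := ⟨hp⟩
  have hple : 2 ≤ p := hp.two_le
  have h2 : (2 : ZMod p) ≠ 0 := by
    intro h
    have h' : ((2 : ℕ) : ZMod p) = 0 := by exact_mod_cast h
    have hdvd := (ZMod.natCast_eq_zero_iff 2 p).mp h'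
    have := Nat.le_of_dvd (by norm_num) hdvd
    interval_cases p
    · exact hodd rfl
  set A := Finset.univ.filter (fun y : ZMod p => y.val < (m - y).val) with hA
  set B := Finset.univ.filter (fun y : ZMod p => (m - y).val < y.val) with hB
  set C := Finset.univ.filter (fun y : ZMod p => y.val = (m - y).val) with hC
  -- step 1: card S = card A
  have hS : (Finset.univ.filter
      (fun xy : ZMod p × ZMod p =>
        xy.1 + xy.2 = m ∧ xy.2.val < p - 1 ∧ xy.2.val < xy.1.val)).card = A.card := by
    apply Finset.card_bij' (fun xy _ => xy.2) (fun y _ => (m - y, y))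
    · intro xy hxy
      simp only [hA, Finset.mem_filter, Finset.mem_univ, true_and] at hxy ⊢
      obtain ⟨hsum, _, hlt⟩ := hxy
      have : xy.1 = m - xy.2 := by linear_combination hsum
      rw [← this]; exact hlt
    · intro y hy
      simp only [hA, Finset.mem_filter, Finset.mem_univ, true_and] at hy ⊢
      refine ⟨by ring, ?_, hy⟩
      have hlt := (m - y).val_lt
      omega
    · intro xy hxy
      simp only [Finset.mem_filter, Finset.mem_univ, true_and] at hxy
      obtain ⟨hsum, _, _⟩ := hxy
      have : xy.1 = m - xy.2 := by linear_combination hsum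
      exact Prod.ext this.symm rfl
    · intro y _; rfl
  -- step 2: card A = card B
  have hAB : A.card = B.card := by
    apply Finset.card_bij' (fun y _ => m - y) (fun y _ => m - y)
    · intro y hy
      simp only [hA, hB, Finset.mem_filter, Finset.mem_univ, true_and] at hy ⊢
      simpa using hy
    · intro y hy
      simp only [hA, hB, Finset.mem_filter, Finset.mem_univ, true_and] at hy ⊢
      simpa using hy
    · intro y _; ring
    · intro y _; ring
  -- step 3: card C = 1
  have hCcard : C.card = 1 := by
    have : C = {(2 : ZMod p)⁻¹ * m} := by
      ext y
      simp only [hC, Finset.mem_filter, Finset.mem_univ, true_and, Finset.mem_singleton]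
      constructor
      · intro h
        have hy : y = m - y := ZMod.val_injective p h
        have h2y : 2 * y = m := by linear_combination hy
        field_simp
        linear_combination h2y
      · intro h
        subst h
        have : (2 : ZMod p)⁻¹ * m = m - (2 : ZMod p)⁻¹ * m := by
          field_simp
          ring
        rw [← this]
    rw [this, Finset.card_singleton]
  -- partition
  have hpart : A.card + (B.card + C.card) = p := by
    have h1 : A.card + (Finset.univ.filter
        (fun y : ZMod p => ¬ y.val < (m - y).val)).card = p := by
      rw [hA, Finset.card_filter_add_card_filter_not]
      simp [ZMod.card]
    have h2' : (Finset.univ.filter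
        (fun y : ZMod p => ¬ y.val < (m - y).val)).card = B.card + C.card := by
      rw [hB, hC, ← Finset.card_union_of_disjoint]
      · congr 1
        ext y
        simp only [Finset.mem_filter, Finset.mem_univ, true_and, Finset.mem_union]
        omega
      · rw [Finset.disjoint_filter]
        intro y _ h1 h2
        omega
    omega
  rw [hS]
  omega
end

section
/- In a GBTD(k, m), the deficient k-tuples of the m rows partition the km-element point set: every point is deficient for exactly one row, and each row has exactly k deficient points. -/
/-- A GBTD(k, m): a `(km, k, k−1)`-BIBD whose `m(km−1)` blocks are arranged into an
`m × (km−1)` array such that every point occurs exactly once in each column and in at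
most `k` cells of each row. The array is given as `A : Fin m → Fin (k*m-1) → Finset (Fin (k*m))`. -/
structure IsGBTD (k m : ℕ) (A : Fin m → Fin (k * m - 1) → Finset (Fin (k * m))) : Prop where
  block_size : ∀ i j, (A i j).card = k
  pair_balanced : ∀ x y : Fin (k * m), x ≠ y →
    (Finset.univ.filter
      (fun ij : Fin m × Fin (k * m - 1) => x ∈ A ij.1 ij.2 ∧ y ∈ A ij.1 ij.2)).card = k - 1
  col_once : ∀ (x : Fin (k * m)) (j : Fin (k * m - 1)),
    (Finset.univ.filter (fun i : Fin m => x ∈ A i j)).card = 1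
  row_le : ∀ (x : Fin (k * m)) (i : Fin m),
    (Finset.univ.filter (fun j : Fin (k * m - 1) => x ∈ A i j)).card ≤ k

/-- The number of blocks of row `i` of the array containing the point `x`. -/
def rowCount (k m : ℕ) (A : Fin m → Fin (k * m - 1) → Finset (Fin (k * m)))
    (x : Fin (k * m)) (i : Fin m) : ℕ :=
  (Finset.univ.filter (fun j : Fin (k * m - 1) => x ∈ A i j)).card


open Finset in
lemma sum_rowCount (k m : ℕ) (A : Fin m → Fin (k * m - 1) → Finset (Fin (k * m)))
    (hA : IsGBTD k m A) (x : Fin (k * m)) :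
    ∑ i : Fin m, rowCount k m A x i = k * m - 1 := by
  unfold rowCount
  simp_rw [Finset.card_filter]
  rw [Finset.sum_comm]
  simp_rw [← Finset.card_filter, hA.col_once x]
  simp

lemma sum_deficit (k m : ℕ) (A : Fin m → Fin (k * m - 1) → Finset (Fin (k * m)))
    (hA : IsGBTD k m A) (x : Fin (k * m)) :
    ∑ i : Fin m, (k - rowCount k m A x i) = 1 := by
  have hkm : 0 < k * m := x.pos
  have h1 := sum_rowCount k m A hA x
  have h2 : ∑ i : Fin m, (k - rowCount k m A x i) + ∑ i : Fin m, rowCount k m A x i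
      = k * m := by
    rw [← Finset.sum_add_distrib]
    have h : ∀ i : Fin m, (k - rowCount k m A x i) + rowCount k m A x i = k := fun i =>
      Nat.sub_add_cancel (hA.row_le x i)
    simp [h, mul_comm]
  omega

lemma deficit_le_one (k m : ℕ) (A : Fin m → Fin (k * m - 1) → Finset (Fin (k * m)))
    (hA : IsGBTD k m A) (x : Fin (k * m)) (i : Fin m) :
    k - rowCount k m A x i ≤ 1 := by
  calc k - rowCount k m A x i
      ≤ ∑ i : Fin m, (k - rowCount k m A x i) :=
        Finset.single_le_sum (f := fun i => k - rowCount k m A x i)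
          (fun _ _ => Nat.zero_le _) (Finset.mem_univ i)
    _ = 1 := sum_deficit k m A hA x

/-- In a GBTD(k, m), the deficient k-tuples of the rows partition the point set:
every point is deficient for exactly one row, and each row has exactly `k` deficient points. -/
theorem stmt_7 (k m : ℕ)
    (A : Fin m → Fin (k * m - 1) → Finset (Fin (k * m))) (hA : IsGBTD k m A) :
    (∀ x : Fin (k * m),
      (Finset.univ.filter (fun i : Fin m => rowCount k m A x i = k - 1)).card = 1) ∧
    (∀ i : Fin m,
      (Finset.univ.filter (fun x : Fin (k * m) => rowCount k m A x i = k - 1)).card = k) := by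
  constructor
  · intro x
    have hkm : 0 < k * m := x.pos
    have hk : 0 < k := by
      rcases Nat.eq_zero_or_pos k with h | h
      · subst h; simp at hkm
      · exact h
    have hfe : (Finset.univ.filter (fun i : Fin m => rowCount k m A x i = k - 1))
        = (Finset.univ.filter (fun i : Fin m => k - rowCount k m A x i = 1)) := by
      apply Finset.filter_congr
      intro i _
      have hle := hA.row_le x i
      constructor <;> intro h <;> omega
    rw [hfe, Finset.card_filter]
    refine Eq.trans ?_ (sum_deficit k m A hA x)
    apply Finset.sum_congr rfl
    intro i _
    have hd := deficit_le_one k m A hA x i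
    split <;> omega
  · intro i
    rcases Nat.eq_zero_or_pos k with hk | hk
    · subst hk
      have he : (Finset.univ : Finset (Fin (0 * m))) = ∅ := by
        apply Finset.eq_empty_of_forall_notMem
        intro x
        exact absurd x.isLt (by simp)
      simp [he]
    have hm : 0 < m := i.pos
    have hkm : 0 < k * m := Nat.mul_pos hk hm
    have hsum : ∑ x : Fin (k * m), rowCount k m A x i = (k * m - 1) * k := by
      unfold rowCount
      simp_rw [Finset.card_filter]
      rw [Finset.sum_comm]
      simp_rw [← Finset.card_filter]
      have h : ∀ j, (Finset.univ.filter (fun x : Fin (k * m) => x ∈ A i j)).card = k := by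
        intro j
        rw [Finset.filter_univ_mem]
        exact hA.block_size i j
      simp [Finset.filter_univ_mem, hA.block_size, mul_comm]
    have hde : ∑ x : Fin (k * m), (k - rowCount k m A x i) = k := by
      have h2 : ∑ x : Fin (k * m), (k - rowCount k m A x i)
          + ∑ x : Fin (k * m), rowCount k m A x i = (k * m) * k := by
        rw [← Finset.sum_add_distrib]
        have h : ∀ x : Fin (k * m), (k - rowCount k m A x i) + rowCount k m A x i = k :=
          fun x => Nat.sub_add_cancel (hA.row_le x i)
        simp [h]
      have hsplit : (k * m) * k = (k * m - 1) * k + k := by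
        have h3 : k * m = (k * m - 1) + 1 := by omega
        conv_lhs => rw [h3]
        rw [Nat.succ_mul]
      omega
    have hfe : (Finset.univ.filter (fun x : Fin (k * m) => rowCount k m A x i = k - 1))
        = (Finset.univ.filter (fun x : Fin (k * m) => k - rowCount k m A x i = 1)) := by
      apply Finset.filter_congr
      intro x _
      have hle := hA.row_le x i
      constructor <;> intro h <;> omega
    rw [hfe, Finset.card_filter]
    refine Eq.trans ?_ hde
    apply Finset.sum_congr rfl
    intro x _
    have hd := deficit_le_one k m A hA x i
    split <;> omega
end

section
/- There does not exist a GBTD(k, 2) for any integer k ≥ 2. -/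
/-- There does not exist a GBTD(k, 2) for any integer `k ≥ 2`. -/
theorem stmt_8 (k : ℕ) (hk : 2 ≤ k) :
    ¬ ∃ A : Fin 2 → Fin (k * 2 - 1) → Finset (Fin (k * 2)), IsGBTD k 2 A := by
  rintro ⟨A, hA⟩
  set f : Fin (k * 2) → ℕ :=
    fun x => (Finset.univ.filter (fun j : Fin (k * 2 - 1) => x ∈ A 0 j)).card with hf
  set g : Fin (k * 2) → ℕ :=
    fun x => (Finset.univ.filter (fun j : Fin (k * 2 - 1) => x ∈ A 1 j)).card with hg
  -- each point appears once per column, so f x + g x = number of columns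
  have hfg : ∀ x, f x + g x = k * 2 - 1 := by
    intro x
    have : f x + g x =
        ∑ j : Fin (k * 2 - 1),
          ((if x ∈ A 0 j then 1 else 0) + (if x ∈ A 1 j then 1 else 0)) := by
      simp only [hf, hg, Finset.card_filter, Finset.sum_add_distrib]
    rw [this]
    have : ∀ j : Fin (k * 2 - 1),
        (if x ∈ A 0 j then 1 else 0) + (if x ∈ A 1 j then 1 else 0) = 1 := by
      intro j
      have h := hA.col_once x j
      rwa [Finset.card_filter, Fin.sum_univ_two] at h
    rw [Finset.sum_congr rfl fun j _ => this j]
    simp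
  have hfk : ∀ x, f x ≤ k := fun x => hA.row_le x 0
  have hgk : ∀ x, g x ≤ k := fun x => hA.row_le x 1
  have hfl : ∀ x, k - 1 ≤ f x := by
    intro x
    have h1 := hfg x
    have h2 := hgk x
    omega
  -- total sum of f
  have hsum : ∑ x : Fin (k * 2), f x = (k * 2 - 1) * k := by
    have : ∑ x : Fin (k * 2), f x =
        ∑ j : Fin (k * 2 - 1), ∑ x : Fin (k * 2), (if x ∈ A 0 j then 1 else 0) := by
      simp only [hf, Finset.card_filter]
      rw [Finset.sum_comm]
    rw [this]
    have : ∀ j : Fin (k * 2 - 1),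
        ∑ x : Fin (k * 2), (if x ∈ A 0 j then (1:ℕ) else 0) = k := by
      intro j
      rw [← Finset.card_filter, Finset.filter_univ_mem]
      exact hA.block_size 0 j
    rw [Finset.sum_congr rfl fun j _ => this j]
    simp [mul_comm]
  -- the key pair identity : f x + f y = k + 2 a for distinct x y
  have key : ∀ x y : Fin (k * 2), x ≠ y → ∃ a c : ℕ,
      a + c = k - 1 ∧ f x + f y + 2 * c = (k * 2 - 1) + (a + c) := by
    intro x y hxy
    refine ⟨∑ j : Fin (k * 2 - 1), (if x ∈ A 0 j ∧ y ∈ A 0 j then 1 else 0),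
            ∑ j : Fin (k * 2 - 1), (if x ∈ A 1 j ∧ y ∈ A 1 j then 1 else 0), ?_, ?_⟩
    · have hb := hA.pair_balanced x y hxy
      rw [Finset.card_filter, Fintype.sum_prod_type, Fin.sum_univ_two] at hb
      exact hb
    · have lhs : f x + f y + 2 * ∑ j : Fin (k * 2 - 1),
          (if x ∈ A 1 j ∧ y ∈ A 1 j then 1 else 0) =
          ∑ j : Fin (k * 2 - 1),
            ((if x ∈ A 0 j then 1 else 0) + (if y ∈ A 0 j then 1 else 0)
              + 2 * (if x ∈ A 1 j ∧ y ∈ A 1 j then 1 else 0)) := by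
        simp only [hf, Finset.card_filter, Finset.sum_add_distrib, Finset.mul_sum]
      rw [lhs]
      have rhs : ∀ j : Fin (k * 2 - 1),
          (if x ∈ A 0 j then 1 else 0) + (if y ∈ A 0 j then 1 else 0)
            + 2 * (if x ∈ A 1 j ∧ y ∈ A 1 j then 1 else 0)
          = 1 + ((if x ∈ A 0 j ∧ y ∈ A 0 j then 1 else 0)
              + (if x ∈ A 1 j ∧ y ∈ A 1 j then 1 else 0)) := by
        intro j
        have hx := hA.col_once x j
        have hy := hA.col_once y j
        rw [Finset.card_filter, Fin.sum_univ_two] at hx hy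
        by_cases h1 : x ∈ A 0 j <;> by_cases h2 : y ∈ A 0 j <;>
          by_cases h3 : x ∈ A 1 j <;> by_cases h4 : y ∈ A 1 j <;>
          simp [h1, h2, h3, h4] at hx hy ⊢
      rw [Finset.sum_congr rfl fun j _ => rhs j, Finset.sum_add_distrib,
        Finset.sum_add_distrib]
      simp
  -- exactly k points have f x = k
  set S : Finset (Fin (k * 2)) := Finset.univ.filter (fun x => f x = k) with hS
  have hScard : S.card = k := by
    obtain ⟨m, hm⟩ : ∃ m, k = m + 1 := ⟨k - 1, by omega⟩
    have h1 : ∑ x ∈ S, f x = S.card * k := by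
      rw [Finset.sum_congr rfl (fun x hx => (Finset.mem_filter.mp hx).2)]
      rw [Finset.sum_const, smul_eq_mul]
    have hval : ∀ x ∈ Finset.univ.filter (fun x => ¬ f x = k), f x = m := by
      intro x hx
      have h' := (Finset.mem_filter.mp hx).2
      have := hfl x
      have := hfk x
      omega
    have h2 : ∑ x ∈ Finset.univ.filter (fun x => ¬ f x = k), f x =
        (Finset.univ.filter (fun x => ¬ f x = k)).card * m := by
      rw [Finset.sum_congr rfl hval, Finset.sum_const, smul_eq_mul]
    have h3 := Finset.sum_filter_add_sum_filter_not Finset.univ (fun x => f x = k) f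
    rw [← hS] at h3
    rw [h1, h2, hsum] at h3
    have h4 : S.card + (Finset.univ.filter (fun x => ¬ f x = k)).card = k * 2 := by
      rw [Finset.card_filter_add_card_filter_not]
      simp
    set s := S.card
    set t := (Finset.univ.filter (fun x => ¬ f x = k)).card
    subst hm
    have e1 : s * (m + 1) + t * m = (s + t) * m + s := by ring
    rw [e1, h4] at h3
    have e2 : ((m + 1) * 2) * m + (m + 1) = ((m + 1) * 2 - 1) * (m + 1) := by
      have : (m + 1) * 2 - 1 = 2 * m + 1 := by omega
      rw [this]; ring
    linarith [h3, e2]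
  rcases Nat.even_or_odd k with he | ho
  · -- k even : pick x with f x = k and y with f y = k - 1
    obtain ⟨x, hx⟩ : S.Nonempty := Finset.card_pos.mp (by omega)
    have hT : (Finset.univ.filter (fun x => ¬ f x = k)).Nonempty := by
      apply Finset.card_pos.mp
      have h4 : S.card + (Finset.univ.filter (fun x => ¬ f x = k)).card = k * 2 := by
        rw [Finset.card_filter_add_card_filter_not]; simp
      omega
    obtain ⟨y, hy⟩ := hT
    have hfx : f x = k := (Finset.mem_filter.mp hx).2
    have hfy : f y = k - 1 := by
      have := (Finset.mem_filter.mp hy).2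
      have := hfl y
      have := hfk y
      omega
    have hxy : x ≠ y := by
      intro h; rw [h] at hfx; omega
    obtain ⟨a, c, hac, hid⟩ := key x y hxy
    obtain ⟨u, hu⟩ := he
    omega
  · -- k odd : pick distinct x y with f x = f y = k
    have h2 : 1 < S.card := by omega
    obtain ⟨x, hx, y, hy, hxy⟩ := Finset.one_lt_card.mp h2
    have hfx : f x = k := (Finset.mem_filter.mp hx).2
    have hfy : f y = k := (Finset.mem_filter.mp hy).2
    obtain ⟨a, c, hac, hid⟩ := key x y hxy
    obtain ⟨u, hu⟩ := ho
    omega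
end

section
/- Let p be an odd prime and M_p the matrix over ℤ/pℤ defined by (H*)_i = (ī, i+1̄, ..., i+p−1̄), (H_i, V_j)_l = vector (i(j+1)+jl, i(j+1)+jl+1, ..., i(j+1)+jl+p−1) for j ∈ {0,...,p−2}, and (H_i, V_{p−1})_l = (−l, −l+1, ..., −l+p−1) if l ≥ i, and (−l+1, ..., −l+p) if l < i, where i ∈ ℤ/pℤ and l ∈ {0,...,p−2}. Then every element of ℤ/pℤ occurs exactly p times in each column of M_p. -/
/-- The matrix `M_p` of the construction: a `p² × p²` matrix over `ℤ/pℤ`.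
Rows: the first `p` rows form `H*` (indexed by `i ∈ ℤ/pℤ`), the remaining rows are
grouped into blocks `H_i` of `p−1` rows each (indexed by `l ∈ {0,…,p−2}`).
Columns are grouped into blocks `V_j` of `p` columns each (entries of a row within a
block indexed by `mc ∈ {0,…,p−1}`).
`(H*)_i` is the concatenation of the constant vectors `ī, i+1̄, …, i+p−1̄`;
for `j ≤ p−2`, `(H_i, V_j)_l` is the arithmetic vector starting at `i(j+1) + jl`
with common difference 1; `(H_i, V_{p−1})_l` is the arithmetic vector starting at `−l`
if `l ≥ i` and at `−l+1` if `l < i` (comparing canonical representatives). -/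
def Mp (p : ℕ) : Fin (p * p) → Fin (p * p) → ZMod p := fun r c =>
  let j : ℕ := c.val / p      -- column block `V_j`
  let mc : ℕ := c.val % p     -- position within the block
  if r.val < p then
    -- row of `H*` with index `i = r.val`: constant `i + j` on the block `V_j`
    ((r.val + j : ℕ) : ZMod p)
  else
    -- row `l` of block `H_i`
    let i : ℕ := (r.val - p) / (p - 1)
    let l : ℕ := (r.val - p) % (p - 1)
    if j < p - 1 then
      ((i * (j + 1) + j * l + mc : ℕ) : ZMod p)
    else
      (if i ≤ l then -(l : ZMod p) else -(l : ZMod p) + 1) + (mc : ℕ)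

lemma Mp_apply_lt (p : ℕ) (r c : Fin (p*p)) (h : r.val < p) :
    Mp p r c = ((r.val + c.val / p : ℕ) : ZMod p) := by
  unfold Mp; simp only [if_pos h]

lemma Mp_apply_ge (p : ℕ) (r c : Fin (p*p)) (i l : ℕ) (hl : l < p - 1)
    (hr : r.val = p + (l + (p-1) * i)) :
    Mp p r c =
      if c.val / p < p - 1 then
        ((i * (c.val / p + 1) + (c.val / p) * l + c.val % p : ℕ) : ZMod p)
      else
        (if i ≤ l then -((l : ℕ) : ZMod p) else -((l : ℕ) : ZMod p) + 1)
          + ((c.val % p : ℕ) : ZMod p) := by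
  have hp1 : 0 < p - 1 := by omega
  have hd : (r.val - p) / (p-1) = i := by
    rw [hr, Nat.add_sub_cancel_left, Nat.add_mul_div_left _ _ hp1,
      Nat.div_eq_of_lt hl, Nat.zero_add]
  have hm : (r.val - p) % (p-1) = l := by
    rw [hr, Nat.add_sub_cancel_left, Nat.add_mul_mod_self_left, Nat.mod_eq_of_lt hl]
  unfold Mp
  simp only [if_neg (by omega : ¬ r.val < p), hd, hm]

lemma count_cast (p n : ℕ) [NeZero p] (hn : n ≤ p) (b : ZMod p) :
    (Finset.univ.filter fun i : Fin n => ((i.val : ℕ) : ZMod p) = b).card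
      = if b.val < n then 1 else 0 := by
  have key : ∀ i : Fin n, (((i.val : ℕ) : ZMod p) = b) ↔ i.val = b.val := by
    intro i
    constructor
    · intro h
      have := ZMod.val_cast_of_lt (lt_of_lt_of_le i.isLt hn)
      rw [← h, this]
    · intro h
      rw [h, ZMod.natCast_val, ZMod.cast_id]
  split_ifs with h
  · rw [Finset.card_eq_one]
    refine ⟨⟨b.val, h⟩, ?_⟩
    ext i
    simp [key i, Fin.ext_iff]
  · rw [Finset.card_eq_zero]
    ext i
    simp only [Finset.mem_filter, Finset.mem_univ, true_and, Finset.notMem_empty, iff_false]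
    rw [key i]
    intro hh
    exact h (hh ▸ i.isLt)

lemma sum_cast_eq_one (p : ℕ) [NeZero p] (b : ZMod p) :
    (∑ i : Fin p, if ((i.val : ℕ) : ZMod p) = b then 1 else 0) = 1 := by
  rw [← Finset.card_filter, count_cast p p le_rfl b, if_pos (ZMod.val_lt b)]

lemma sum_fin_ite (p n : ℕ) [NeZero p] (hn : n ≤ p) (s : ZMod p) (g : ℕ → ℕ) :
    (∑ l : Fin n, if ((l.val : ℕ) : ZMod p) = s then g l.val else 0)
      = if s.val < n then g s.val else 0 := by
  have key : ∀ i : Fin n, (((i.val : ℕ) : ZMod p) = s) ↔ i.val = s.val := by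
    intro i
    constructor
    · intro h
      have := ZMod.val_cast_of_lt (lt_of_lt_of_le i.isLt hn)
      rw [← h, this]
    · intro h
      rw [h, ZMod.natCast_val, ZMod.cast_id]
  split_ifs with h
  · have : ∀ l : Fin n, (if ((l.val : ℕ) : ZMod p) = s then g l.val else 0)
        = if l = (⟨s.val, h⟩ : Fin n) then g l.val else 0 := by
      intro l
      congr 1
      rw [key l, Fin.ext_iff]
    rw [Finset.sum_congr rfl (fun l _ => this l), Finset.sum_ite_eq']
    simp
  · apply Finset.sum_eq_zero
    intro l _
    rw [if_neg]
    rw [key l]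
    intro hh
    exact h (hh ▸ l.isLt)

lemma card_le_filter (n k : ℕ) (hk : k < n) :
    (Finset.univ.filter fun i : Fin n => i.val ≤ k).card = k + 1 := by
  have : (Finset.univ.filter fun i : Fin n => i.val ≤ k) = Finset.Iic ⟨k, hk⟩ := by
    ext i; simp [Fin.le_def]
  rw [this, Fin.card_Iic]

/-- Every element of `ℤ/pℤ` occurs exactly `p` times in each column of `M_p`. -/
theorem stmt_10 (p : ℕ) (hp : p.Prime) (hodd : p ≠ 2) [NeZero p] :
    ∀ (c : Fin (p * p)) (a : ZMod p),
      (Finset.univ.filter (fun r : Fin (p * p) => Mp p r c = a)).card = p := by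
  intro c a
  haveI := Fact.mk hp
  haveI : Fact (1 < p) := ⟨hp.one_lt⟩
  have hp3 : 3 ≤ p := by
    rcases hp.two_le.lt_or_eq with h | h
    · omega
    · omega
  have hple : p ≤ p * p := Nat.le_mul_of_pos_left p hp.pos
  have hpp : p + p * (p - 1) = p * p := by
    rw [Nat.mul_sub, Nat.mul_one]; omega
  have hjp : c.val / p < p := Nat.div_lt_of_lt_mul c.isLt
  set j : ℕ := c.val / p with hj
  set mc : ℕ := c.val % p with hmc
  let e : (Fin p ⊕ Fin p × Fin (p - 1)) ≃ Fin (p * p) :=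
    ((Equiv.refl (Fin p)).sumCongr finProdFinEquiv).trans
      (finSumFinEquiv.trans (finCongr hpp))
  have e_inl : ∀ i : Fin p, (e (Sum.inl i)).val = i.val := by
    intro i; simp [e]
  have e_inr : ∀ (i : Fin p) (l : Fin (p - 1)),
      (e (Sum.inr (i, l))).val = p + (l.val + (p - 1) * i.val) := by
    intro i l; simp [e, finProdFinEquiv_apply_val]
  rw [Finset.card_filter,
    ← Equiv.sum_comp e (fun r => if Mp p r c = a then 1 else 0),
    Fintype.sum_sum_type, Fintype.sum_prod_type]
  -- first part : H* rows contribute 1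
  have part1 : (∑ i : Fin p, if Mp p (e (Sum.inl i)) c = a then 1 else 0) = 1 := by
    have hv : ∀ i : Fin p, Mp p (e (Sum.inl i)) c = ((i.val : ℕ) : ZMod p) + (j : ZMod p) := by
      intro i
      rw [Mp_apply_lt p _ c (by rw [e_inl]; exact i.isLt), e_inl, ← hj]
      push_cast; ring
    calc (∑ i : Fin p, if Mp p (e (Sum.inl i)) c = a then 1 else 0)
        = ∑ i : Fin p, if ((i.val : ℕ) : ZMod p) = a - (j : ZMod p) then 1 else 0 := by
          refine Finset.sum_congr rfl fun i _ => ?_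
          rw [hv i]
          exact if_congr eq_sub_iff_add_eq.symm rfl rfl
      _ = 1 := sum_cast_eq_one p _
  rw [part1]
  -- second part
  rw [Finset.sum_comm]
  have hMp : ∀ (i : Fin p) (l : Fin (p - 1)),
      Mp p (e (Sum.inr (i, l))) c =
        if j < p - 1 then
          ((i.val * (j + 1) + j * l.val + mc : ℕ) : ZMod p)
        else
          (if i.val ≤ l.val then -((l.val : ℕ) : ZMod p) else -((l.val : ℕ) : ZMod p) + 1)
            + ((mc : ℕ) : ZMod p) := by
    intro i l
    rw [Mp_apply_ge p _ c i.val l.val l.isLt (e_inr i l), ← hj, ← hmc]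
  by_cases hjlt : j < p - 1
  · -- case j < p - 1
    have inner : ∀ l : Fin (p - 1),
        (∑ i : Fin p, if Mp p (e (Sum.inr (i, l))) c = a then 1 else 0) = 1 := by
      intro l
      have hu : ((j + 1 : ℕ) : ZMod p) ≠ 0 := by
        have h2 : j + 1 < p := by omega
        intro h0
        rw [ZMod.natCast_eq_zero_iff] at h0
        exact Nat.not_dvd_of_pos_of_lt (Nat.succ_pos j) h2 h0
      calc (∑ i : Fin p, if Mp p (e (Sum.inr (i, l))) c = a then 1 else 0)
          = ∑ i : Fin p, if ((i.val : ℕ) : ZMod p)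
              = (a - ((j * l.val + mc : ℕ) : ZMod p)) / ((j + 1 : ℕ) : ZMod p)
            then 1 else 0 := by
            refine Finset.sum_congr rfl fun i _ => ?_
            rw [hMp i l, if_pos hjlt]
            refine if_congr ?_ rfl rfl
            rw [eq_div_iff hu]
            constructor
            · intro h; push_cast at h ⊢; linear_combination h
            · intro h; push_cast at h ⊢; linear_combination h
        _ = 1 := sum_cast_eq_one p _
    rw [Finset.sum_congr rfl fun l _ => inner l, Finset.sum_const, smul_eq_mul, mul_one,
      Finset.card_univ, Fintype.card_fin]
    omega
  · -- case j = p - 1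
    set M : ZMod p := ((mc : ℕ) : ZMod p) with hM
    set t : ZMod p := M - a with ht
    have inner : ∀ l : Fin (p - 1),
        (∑ i : Fin p, if Mp p (e (Sum.inr (i, l))) c = a then 1 else 0)
          = (if ((l.val : ℕ) : ZMod p) = t then l.val + 1 else 0)
            + (if ((l.val : ℕ) : ZMod p) = t + 1 then p - (l.val + 1) else 0) := by
      intro l
      have step1 : (∑ i : Fin p, if Mp p (e (Sum.inr (i, l))) c = a then 1 else 0)
          = ∑ i : Fin p, if i.val ≤ l.val
              then (if ((l.val : ℕ) : ZMod p) = t then 1 else 0)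
              else (if ((l.val : ℕ) : ZMod p) = t + 1 then 1 else 0) := by
        refine Finset.sum_congr rfl fun i _ => ?_
        rw [hMp i l, if_neg hjlt]
        by_cases hc : i.val ≤ l.val
        · rw [if_pos hc, if_pos hc]
          refine if_congr ?_ rfl rfl
          rw [ht]
          constructor
          · intro h; linear_combination -h
          · intro h; linear_combination -h
        · rw [if_neg hc, if_neg hc]
          refine if_congr ?_ rfl rfl
          rw [ht]
          constructor
          · intro h; linear_combination -h
          · intro h; linear_combination -h
      rw [step1, Finset.sum_ite]
      simp only [Finset.sum_const, smul_eq_mul]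
      rw [card_le_filter p l.val (by omega)]
      have hcard2 : (Finset.univ.filter fun i : Fin p => ¬ i.val ≤ l.val).card
          = p - (l.val + 1) := by
        have := Finset.card_filter_add_card_filter_not
          (s := (Finset.univ : Finset (Fin p))) (fun i : Fin p => i.val ≤ l.val)
        rw [card_le_filter p l.val (by omega), Finset.card_univ, Fintype.card_fin] at this
        omega
      rw [hcard2]
      rw [mul_ite, mul_ite, mul_one, mul_zero, mul_one, mul_zero]
    rw [Finset.sum_congr rfl fun l _ => inner l, Finset.sum_add_distrib,
      sum_fin_ite p (p - 1) (by omega) t (fun v => v + 1),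
      sum_fin_ite p (p - 1) (by omega) (t + 1) (fun v => p - (v + 1))]
    have htval : t.val < p := ZMod.val_lt t
    have ht1 : (t + 1).val = (t.val + 1) % p := by
      rw [ZMod.val_add, ZMod.val_one]
    by_cases hcase : t.val = p - 1
    · rw [ht1, hcase]
      rw [show (p - 1 + 1) % p = 0 by rw [Nat.sub_add_cancel (by omega)]; exact Nat.mod_self p]
      simp only [if_neg (lt_irrefl (p-1)), if_pos (by omega : 0 < p - 1)]
      omega
    · rw [ht1, Nat.mod_eq_of_lt (by omega)]
      by_cases h2 : t.val + 1 < p - 1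
      · rw [if_pos (by omega), if_pos h2]; omega
      · rw [if_pos (by omega), if_neg h2]; omega
end

section
/- Let p be an odd prime and M_p the matrix defined as in the construction (with (H*)_i = (ī, ..., i+p−1̄), (H_i,V_j)_l starting at i(j+1)+jl for j ≤ p−2, and (H_i,V_{p−1})_l starting at −l if l ≥ i and −l+1 if l < i). Then for each j ∈ ℤ/pℤ, any two distinct columns within the same column-block V_j agree in exactly p rows, all of which lie among the first p rows (i.e., in H*). -/
/-- Any two distinct columns of `M_p` lying in the same column block `V_j` agree in
exactly `p` rows, and all of these rows lie among the first `p` rows (i.e. in `H*`). -/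
theorem stmt_11 (p : ℕ) (hp : p.Prime) (hodd : p ≠ 2) [NeZero p] :
    ∀ c₁ c₂ : Fin (p * p), c₁ ≠ c₂ → c₁.val / p = c₂.val / p →
      (Finset.univ.filter (fun r : Fin (p * p) => Mp p r c₁ = Mp p r c₂)).card = p ∧
      (∀ r : Fin (p * p), Mp p r c₁ = Mp p r c₂ → r.val < p) := by
  intro c₁ c₂ hne hdiv
  have hp1 : 1 < p := hp.one_lt
  have hmc : c₁.val % p ≠ c₂.val % p := by
    intro h
    apply hne; apply Fin.ext
    have h1 := Nat.div_add_mod c₁.val p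
    have h2 := Nat.div_add_mod c₂.val p
    rw [hdiv, h] at h1
    omega
  have hmcZ : ((c₁.val % p : ℕ) : ZMod p) ≠ ((c₂.val % p : ℕ) : ZMod p) := by
    intro h
    apply hmc
    have := congrArg ZMod.val h
    rwa [ZMod.val_natCast_of_lt (Nat.mod_lt _ (by omega)),
      ZMod.val_natCast_of_lt (Nat.mod_lt _ (by omega))] at this
  have key : ∀ r : Fin (p * p), (Mp p r c₁ = Mp p r c₂) ↔ r.val < p := by
    intro r
    unfold Mp
    simp only [hdiv]
    by_cases hr : r.val < p
    · simp [hr]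
    · simp only [hr, if_false]
      constructor
      · intro h
        exfalso
        by_cases hj : c₂.val / p < p - 1
        · rw [if_pos hj, if_pos hj] at h
          push_cast at h
          exact hmcZ (by exact_mod_cast add_left_cancel h)
        · rw [if_neg hj, if_neg hj] at h
          exact hmcZ (add_left_cancel h)
      · exact False.elim
  refine ⟨?_, fun r h => (key r).mp h⟩
  have heq : (Finset.univ.filter (fun r : Fin (p * p) => Mp p r c₁ = Mp p r c₂))
      = Finset.univ.filter (fun r : Fin (p * p) => r.val < p) := by
    apply Finset.filter_congr; intro r _; simpa using key r
  have hlt : p < p * p := by nlinarith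
  have hIio : Finset.univ.filter (fun r : Fin (p * p) => r.val < p)
      = Finset.Iio (⟨p, hlt⟩ : Fin (p * p)) := by
    ext r; simp [Fin.lt_def]
  rw [heq, hIio, Fin.card_Iio]
end

section
/- Let p be an odd prime, j₁ ∈ {0, ..., p−2}, and m, n ∈ ℤ/pℤ. Then the number of pairs (i, l) with i ∈ ℤ/pℤ, l ∈ {0, ..., p−2}, satisfying either [i(j₁+1) + j₁·l + m = −l + n and l ≥ i] or [i(j₁+1) + j₁·l + m = −l + 1 + n and l < i] (in ℤ/pℤ, comparing l and i via canonical representatives) is exactly p − 1. -/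
/-- Counting lemma over naturals: for `cv < 2k+1`, the number of `l ∈ [0, 2k)` with
`(cv + (2k+1 - l)) % (2k+1) ≤ l` equals `k`. -/
lemma stmt13_count_nat (p k cv : ℕ) (hp : p = 2*k+1) (hcv : cv < p) :
    ((Finset.range (p-1)).filter (fun l => (cv + (p - l)) % p ≤ l)).card = k := by
  subst hp
  have h1 : 2*k+1-1 = 2*k := by omega
  rw [h1]
  have hm : ∀ l : ℕ, (cv + (2*k+1 - l)) % (2*k+1)
      = if l ≤ cv then cv - l else cv + (2*k+1 - l) := by
    intro l
    split_ifs with h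
    · have h2 : cv + (2*k+1 - l) = (cv - l) + 1*(2*k+1) := by omega
      rw [h2, Nat.add_mul_mod_self_right, Nat.mod_eq_of_lt (by omega)]
    · exact Nat.mod_eq_of_lt (by omega)
  rcases Nat.lt_or_ge cv (2*k) with hcase | hcase
  · have hset : (Finset.range (2*k)).filter (fun l => (cv + (2*k+1 - l)) % (2*k+1) ≤ l)
        = (Finset.Ico ((cv+1)/2) (cv + 1)) ∪ (Finset.Ico (k+1+cv/2) (2*k)) := by
      ext l
      simp only [Finset.mem_filter, Finset.mem_range, Finset.mem_union, Finset.mem_Ico, hm]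
      constructor
      · rintro ⟨hl, hcond⟩
        split_ifs at hcond <;> omega
      · intro h
        have hl : l < 2*k := by omega
        refine ⟨hl, ?_⟩
        split_ifs <;> omega
    rw [hset, Finset.card_union_of_disjoint, Nat.card_Ico, Nat.card_Ico]
    · omega
    · rw [Finset.disjoint_left]
      intro a ha hb
      simp only [Finset.mem_Ico] at ha hb
      omega
  · have hset : (Finset.range (2*k)).filter (fun l => (cv + (2*k+1 - l)) % (2*k+1) ≤ l)
        = Finset.Ico ((cv+1)/2) (2*k) := by
      ext l
      simp only [Finset.mem_filter, Finset.mem_range, Finset.mem_Ico, hm]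
      constructor
      · rintro ⟨hl, hcond⟩
        split_ifs at hcond <;> omega
      · intro h
        refine ⟨by omega, ?_⟩
        split_ifs <;> omega
    rw [hset, Nat.card_Ico]
    omega

/-- The number of `l ∈ Fin (p-1)` with `(c - l).val ≤ l.val` is `(p-1)/2` for odd `p`. -/
lemma stmt13_count_le (p k : ℕ) [NeZero p] (hpk : p = 2*k+1) (c : ZMod p) :
    (Finset.univ.filter (fun l : Fin (p-1) => (c - (l.val : ZMod p)).val ≤ l.val)).card = k := by
  have hval : ∀ l : ℕ, l < p → ((c - (l : ZMod p)).val) = (c.val + (p - l)) % p := by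
    intro l hl
    have h2 : (-(l : ZMod p)) = ((p - l : ℕ) : ZMod p) := by
      have : ((p - l : ℕ) : ZMod p) = (p : ZMod p) - (l : ZMod p) := by
        push_cast [Nat.cast_sub hl.le]; ring
      rw [this, ZMod.natCast_self, zero_sub]
    rw [sub_eq_add_neg, ZMod.val_add, h2, ZMod.val_natCast]
    conv_rhs => rw [Nat.add_mod]
    rw [Nat.mod_eq_of_lt (ZMod.val_lt c)]
  have hcard : (Finset.univ.filter
        (fun l : Fin (p-1) => (c - (l.val : ZMod p)).val ≤ l.val)).card
      = ((Finset.range (p-1)).filter (fun l => (c.val + (p - l)) % p ≤ l)).card := by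
    apply Finset.card_bij (fun (l : Fin (p-1)) _ => l.val)
    · intro a ha
      simp only [Finset.mem_filter, Finset.mem_univ, true_and] at ha
      simp only [Finset.mem_filter, Finset.mem_range]
      exact ⟨a.isLt, by rw [← hval a.val (by omega)]; exact ha⟩
    · intro a _ b _ h
      exact Fin.ext h
    · intro b hb
      simp only [Finset.mem_filter, Finset.mem_range] at hb
      refine ⟨⟨b, hb.1⟩, ?_, rfl⟩
      simp only [Finset.mem_filter, Finset.mem_univ, true_and]
      rw [hval b (by omega)]; exact hb.2
  rw [hcard]
  exact stmt13_count_nat p k c.val hpk (ZMod.val_lt c)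

/-- For `j₁ ∈ {0, …, p−2}` and `m, n ∈ ℤ/pℤ`, the number of pairs `(i, l)` with
`i ∈ ℤ/pℤ`, `l ∈ {0, …, p−2}` satisfying either `i(j₁+1) + j₁·l + m = −l + n` with
`l ≥ i`, or `i(j₁+1) + j₁·l + m = −l + 1 + n` with `l < i` (representatives compared),
is exactly `p − 1`. -/
theorem stmt_13 (p : ℕ) (hp : p.Prime) (hodd : p ≠ 2) [NeZero p]
    (j₁ : ℕ) (hj₁ : j₁ ≤ p - 2) (m n : ZMod p) :
    (Finset.univ.filter
      (fun il : ZMod p × Fin (p - 1) =>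
        (il.1 * ((j₁ : ZMod p) + 1) + (j₁ : ZMod p) * (il.2.val : ZMod p) + m =
            -(il.2.val : ZMod p) + n ∧ il.1.val ≤ il.2.val) ∨
        (il.1 * ((j₁ : ZMod p) + 1) + (j₁ : ZMod p) * (il.2.val : ZMod p) + m =
            -(il.2.val : ZMod p) + 1 + n ∧ il.2.val < il.1.val))).card = p - 1 := by
  haveI := Fact.mk hp
  obtain ⟨k, hk⟩ : ∃ k, p = 2*k+1 := by
    have := hp.two_le
    have hodd' : Odd p := hp.odd_of_ne_two hodd
    obtain ⟨k, hk⟩ := hodd'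
    exact ⟨k, by omega⟩
  have hk1 : 1 ≤ k := by have := hp.two_le; omega
  set e : ZMod p := (j₁ : ZMod p) + 1 with he_def
  have he : e ≠ 0 := by
    have : e = ((j₁ + 1 : ℕ) : ZMod p) := by push_cast; ring
    rw [this, Ne, ZMod.natCast_eq_zero_iff]
    intro hdvd
    have := Nat.le_of_dvd (by omega) hdvd
    omega
  have hinv : e * e⁻¹ = 1 := mul_inv_cancel₀ he
  set c : ZMod p := (n - m) * e⁻¹ with hc_def
  set c' : ZMod p := (1 + n - m) * e⁻¹ with hc'_def
  have key1 : ∀ (i : ZMod p) (l : Fin (p-1)),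
      (i * e + (j₁ : ZMod p) * (l.val : ZMod p) + m = -(l.val : ZMod p) + n)
        ↔ i = c - (l.val : ZMod p) := by
    intro i l
    constructor
    · intro h
      have hje : (j₁ : ZMod p) = e - 1 := by rw [he_def]; ring
      rw [hje] at h
      rw [hc_def]
      linear_combination e⁻¹ * h - (i + (l.val : ZMod p)) * hinv
    · intro h
      rw [h]
      have hje : (j₁ : ZMod p) = e - 1 := by rw [he_def]; ring
      rw [hje, hc_def]
      linear_combination (n - m) * hinv
  have key2 : ∀ (i : ZMod p) (l : Fin (p-1)),
      (i * e + (j₁ : ZMod p) * (l.val : ZMod p) + m = -(l.val : ZMod p) + 1 + n)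
        ↔ i = c' - (l.val : ZMod p) := by
    intro i l
    constructor
    · intro h
      have hje : (j₁ : ZMod p) = e - 1 := by rw [he_def]; ring
      rw [hje] at h
      rw [hc'_def]
      linear_combination e⁻¹ * h - (i + (l.val : ZMod p)) * hinv
    · intro h
      rw [h]
      have hje : (j₁ : ZMod p) = e - 1 := by rw [he_def]; ring
      rw [hje, hc'_def]
      linear_combination (1 + n - m) * hinv
  -- split the filter
  have hsplit : (Finset.univ.filter
      (fun il : ZMod p × Fin (p - 1) =>
        (il.1 * ((j₁ : ZMod p) + 1) + (j₁ : ZMod p) * (il.2.val : ZMod p) + m =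
            -(il.2.val : ZMod p) + n ∧ il.1.val ≤ il.2.val) ∨
        (il.1 * ((j₁ : ZMod p) + 1) + (j₁ : ZMod p) * (il.2.val : ZMod p) + m =
            -(il.2.val : ZMod p) + 1 + n ∧ il.2.val < il.1.val))).card
      = (Finset.univ.filter (fun il : ZMod p × Fin (p - 1) =>
          il.1 = c - (il.2.val : ZMod p) ∧ il.1.val ≤ il.2.val)).card
        + (Finset.univ.filter (fun il : ZMod p × Fin (p - 1) =>
          il.1 = c' - (il.2.val : ZMod p) ∧ il.2.val < il.1.val)).card := by
    rw [← Finset.card_union_of_disjoint]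
    · congr 1
      ext il
      simp only [Finset.mem_filter, Finset.mem_univ, true_and, Finset.mem_union]
      rw [← he_def, key1 il.1 il.2, key2 il.1 il.2]
    · rw [Finset.disjoint_left]
      rintro a ha hb
      simp only [Finset.mem_filter, Finset.mem_univ, true_and] at ha hb
      omega
  rw [hsplit]
  -- first piece
  have h1 : (Finset.univ.filter (fun il : ZMod p × Fin (p - 1) =>
        il.1 = c - (il.2.val : ZMod p) ∧ il.1.val ≤ il.2.val)).card
      = (Finset.univ.filter
          (fun l : Fin (p-1) => (c - (l.val : ZMod p)).val ≤ l.val)).card := by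
    apply Finset.card_bij (fun (a : ZMod p × Fin (p-1)) _ => a.2)
    · intro a ha
      simp only [Finset.mem_filter, Finset.mem_univ, true_and] at ha ⊢
      rw [← ha.1]; exact ha.2
    · intro a ha b hb h
      simp only [Finset.mem_filter, Finset.mem_univ, true_and] at ha hb
      exact Prod.ext (by rw [ha.1, hb.1, h]) h
    · intro b hb
      simp only [Finset.mem_filter, Finset.mem_univ, true_and] at hb
      exact ⟨(c - (b.val : ZMod p), b), by
        simp only [Finset.mem_filter, Finset.mem_univ, true_and]; exact hb, rfl⟩
  -- second piece
  have h2 : (Finset.univ.filter (fun il : ZMod p × Fin (p - 1) =>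
        il.1 = c' - (il.2.val : ZMod p) ∧ il.2.val < il.1.val)).card
      = (Finset.univ.filter
          (fun l : Fin (p-1) => l.val < (c' - (l.val : ZMod p)).val)).card := by
    apply Finset.card_bij (fun (a : ZMod p × Fin (p-1)) _ => a.2)
    · intro a ha
      simp only [Finset.mem_filter, Finset.mem_univ, true_and] at ha ⊢
      rw [← ha.1]; exact ha.2
    · intro a ha b hb h
      simp only [Finset.mem_filter, Finset.mem_univ, true_and] at ha hb
      exact Prod.ext (by rw [ha.1, hb.1, h]) h
    · intro b hb
      simp only [Finset.mem_filter, Finset.mem_univ, true_and] at hb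
      exact ⟨(c' - (b.val : ZMod p), b), by
        simp only [Finset.mem_filter, Finset.mem_univ, true_and]; exact hb, rfl⟩
  rw [h1, h2]
  have hA : (Finset.univ.filter
      (fun l : Fin (p-1) => (c - (l.val : ZMod p)).val ≤ l.val)).card = k :=
    stmt13_count_le p k hk c
  have hB : (Finset.univ.filter
      (fun l : Fin (p-1) => l.val < (c' - (l.val : ZMod p)).val)).card = k := by
    have hcompl : (Finset.univ.filter
        (fun l : Fin (p-1) => l.val < (c' - (l.val : ZMod p)).val))
        = Finset.univ \ (Finset.univ.filter
          (fun l : Fin (p-1) => (c' - (l.val : ZMod p)).val ≤ l.val)) := by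
      ext l
      simp only [Finset.mem_filter, Finset.mem_univ, true_and, Finset.mem_sdiff, not_le]
    rw [hcompl, Finset.card_sdiff_of_subset (Finset.filter_subset _ _), stmt13_count_le p k hk c',
      Finset.card_univ, Fintype.card_fin]
    omega
  rw [hA, hB]
  omega
end

section
/- Let p be an odd prime, j₁ ∈ {0, ..., p−2}, and m, n ∈ ℤ/pℤ. The number of pairs (i, l), i ∈ ℤ/pℤ, l ∈ {0, ..., p−2}, with (i + l)(j₁ + 1) = n − m in ℤ/pℤ and l ≥ i (comparing canonical representatives) is exactly (p−1)/2. -/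
lemma count_aux (p c : ℕ) (hp : Odd p) (h3 : 3 ≤ p) (hc : c < p) :
    ((Finset.range (p-1)).filter (fun l => (c + p - l) % p ≤ l)).card = (p-1)/2 := by
  obtain ⟨k, hk⟩ := hp
  have hset : (Finset.range (p-1)).filter (fun l => (c + p - l) % p ≤ l)
      = Finset.Icc ((c+1)/2) (min c (p-2)) ∪ Finset.Icc ((c+p+1)/2) (p-2) := by
    ext l
    simp only [Finset.mem_filter, Finset.mem_range, Finset.mem_union, Finset.mem_Icc]
    by_cases hlc : l ≤ c
    · have h1 : c + p - l = (c - l) + p := by omega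
      rw [h1, Nat.add_mod_right, Nat.mod_eq_of_lt (by omega)]
      omega
    · rw [Nat.mod_eq_of_lt (by omega)]
      omega
  rw [hset, Finset.card_union_of_disjoint, Nat.card_Icc, Nat.card_Icc]
  · omega
  · rw [Finset.disjoint_left]
    intro a ha ha'
    simp only [Finset.mem_Icc] at ha ha'
    omega

/-- For `j₁ ∈ {0, …, p−2}` and `m, n ∈ ℤ/pℤ`, the number of pairs `(i, l)` with
`i ∈ ℤ/pℤ`, `l ∈ {0, …, p−2}`, `(i + l)(j₁ + 1) = n − m` in `ℤ/pℤ` and `l ≥ i`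
(comparing canonical representatives) is exactly `(p−1)/2`. -/
theorem stmt_14 (p : ℕ) (hp : p.Prime) (hodd : p ≠ 2) [NeZero p]
    (j₁ : ℕ) (hj₁ : j₁ ≤ p - 2) (m n : ZMod p) :
    (Finset.univ.filter
      (fun il : ZMod p × Fin (p - 1) =>
        (il.1 + (il.2.val : ZMod p)) * ((j₁ : ZMod p) + 1) = n - m ∧
          il.1.val ≤ il.2.val)).card = (p - 1) / 2 := by
  haveI : Fact p.Prime := ⟨hp⟩
  have h3 : 3 ≤ p := by
    rcases hp.two_le.lt_or_eq with h | h
    · omega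
    · omega
  set u : ZMod p := (j₁ : ZMod p) + 1 with hu_def
  have hu : u ≠ 0 := by
    have h1 : ((j₁ + 1 : ℕ) : ZMod p) = u := by push_cast [hu_def]; ring
    rw [← h1]
    rw [Ne, ZMod.natCast_eq_zero_iff]
    intro hdvd
    have := Nat.le_of_dvd (by omega) hdvd
    omega
  set c : ZMod p := (n - m) * u⁻¹ with hc_def
  have hcu : c * u = n - m := by
    rw [hc_def, mul_assoc, inv_mul_cancel₀ hu, mul_one]
  have hval : ∀ l : ℕ, l < p → (c - (l : ZMod p)).val = (c.val + p - l) % p := by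
    intro l hl
    have h1 : ((c.val + p - l : ℕ) : ZMod p) = c - l := by
      rw [Nat.cast_sub (by omega)]
      push_cast
      simp [ZMod.natCast_val, ZMod.natCast_self]
    rw [← h1, ZMod.val_natCast]
  rw [Finset.card_nbij' (fun il : ZMod p × Fin (p-1) => il.2.val)
      (fun l => (c - (l : ZMod p), ⟨l % (p-1), Nat.mod_lt _ (by omega)⟩))
      (s := _) (t := (Finset.range (p-1)).filter (fun l => (c.val + p - l) % p ≤ l))]
  · exact count_aux p c.val (hp.odd_of_ne_two hodd) h3 (ZMod.val_lt c)
  · rintro ⟨i, l⟩ hmem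
    simp only [Finset.mem_coe, Finset.mem_filter, Finset.mem_univ, true_and] at hmem
    obtain ⟨heq, hle⟩ := hmem
    have hi : i = c - (l.val : ZMod p) := by
      have : i + (l.val : ZMod p) = c := by
        rw [hc_def, eq_mul_inv_iff_mul_eq₀ hu]; exact heq
      linear_combination this
    simp only [Finset.mem_coe, Finset.mem_filter, Finset.mem_range]
    refine ⟨l.isLt, ?_⟩
    rw [← hval l.val (by omega)]
    rw [hi] at hle
    exact hle
  · intro l hl
    simp only [Finset.mem_coe, Finset.mem_filter, Finset.mem_range] at hl
    obtain ⟨hlt, hcond⟩ := hl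
    simp only [Finset.mem_coe, Finset.mem_filter, Finset.mem_univ, true_and]
    have hmod : l % (p-1) = l := Nat.mod_eq_of_lt hlt
    constructor
    · simp only [hmod]
      rw [sub_add_cancel]
      exact hcu
    · simp only [hmod]
      rw [hval l (by omega)]
      exact hcond
  · rintro ⟨i, l⟩ hmem
    simp only [Finset.mem_coe, Finset.mem_filter, Finset.mem_univ, true_and] at hmem
    obtain ⟨heq, hle⟩ := hmem
    have hi : i = c - (l.val : ZMod p) := by
      have : i + (l.val : ZMod p) = c := by
        rw [hc_def, eq_mul_inv_iff_mul_eq₀ hu]; exact heq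
      linear_combination this
    have hmod : l.val % (p-1) = l.val := Nat.mod_eq_of_lt l.isLt
    ext
    · simp [hi]
    · simp [hmod]
  · intro l hl
    simp only [Finset.mem_coe, Finset.mem_filter, Finset.mem_range] at hl
    simp [Nat.mod_eq_of_lt hl.1]
end

section
/- For every odd prime p, there exists a GBTD(p, p); that is, there exists a (p², p, p−1)-BIBD on p² points whose p(p²−1) blocks can be arranged into a p × (p²−1) array so that every point occurs exactly once in each column and at most p times in each row. -/
open Finset

namespace GBTD16

variable (p : ℕ) [Fact p.Prime]

/-- Column index type: parabola columns `(a,b)` and vertical columns `t`. -/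
abbrev Col := ((ZMod p)ˣ × ZMod p) ⊕ (ZMod p)ˣ

variable {p}

/-- The block of column `γ` sitting in row `r`. -/
def blk (γ : Col p) (r : ZMod p) : Finset (ZMod p × ZMod p) :=
  Sum.elim
    (fun ab : (ZMod p)ˣ × ZMod p => univ.filter (fun P : ZMod p × ZMod p =>
      P.2 = (ab.1 : ZMod p) * P.1 ^ 2 + ab.2 * P.1 + r + ab.2 ^ 2 * (4 * (ab.1 : ZMod p))⁻¹))
    (fun t : (ZMod p)ˣ => univ.filter (fun P : ZMod p × ZMod p => P.1 = r - (t : ZMod p))) γ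

lemma mem_blk_inl {a : (ZMod p)ˣ} {b r : ZMod p} {P : ZMod p × ZMod p} :
    P ∈ blk (Sum.inl (a, b)) r ↔
      P.2 = (a : ZMod p) * P.1 ^ 2 + b * P.1 + r + b ^ 2 * (4 * (a : ZMod p))⁻¹ := by
  rw [blk, Sum.elim_inl, mem_filter]
  simp only [mem_univ, true_and]

lemma mem_blk_inr {t : (ZMod p)ˣ} {r : ZMod p} {P : ZMod p × ZMod p} :
    P ∈ blk (Sum.inr t) r ↔ P.1 = r - (t : ZMod p) := by
  rw [blk, Sum.elim_inr, mem_filter]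
  simp only [mem_univ, true_and]

lemma two_ne (hodd : p ≠ 2) : (2 : ZMod p) ≠ 0 := by
  intro h
  have h2 : ((2 : ℕ) : ZMod p) = 0 := by exact_mod_cast h
  have hd := (ZMod.natCast_eq_zero_iff 2 p).1 h2
  exact hodd ((Nat.prime_dvd_prime_iff_eq (Fact.out : p.Prime) Nat.prime_two).1 hd)

lemma four_ne (hodd : p ≠ 2) : (4 : ZMod p) ≠ 0 := by
  have h2 := two_ne hodd
  have h : (4 : ZMod p) = 2 * 2 := by norm_num
  rw [h]
  exact mul_ne_zero h2 h2

lemma key (hodd : p ≠ 2) (a : (ZMod p)ˣ) (b r x y : ZMod p) :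
    y = (a : ZMod p) * x ^ 2 + b * x + r + b ^ 2 * (4 * (a : ZMod p))⁻¹ ↔
      (2 * (a : ZMod p) * x + b) ^ 2 = 4 * (a : ZMod p) * (y - r) := by
  have ha : (a : ZMod p) ≠ 0 := a.ne_zero
  have h4 : (4 : ZMod p) ≠ 0 := four_ne hodd
  constructor
  · intro h; subst h; field_simp; ring
  · intro h; field_simp; linear_combination -h

/-- Each block has `p` points. -/
lemma card_blk (γ : Col p) (r : ZMod p) : (blk γ r).card = p := by
  obtain (⟨a, b⟩ | t) := γ
  · have h := Finset.card_nbij' (s := blk (Sum.inl (a, b)) r) (t := (univ : Finset (ZMod p)))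
      (fun P => P.1)
      (fun x => (x, (a : ZMod p) * x ^ 2 + b * x + r + b ^ 2 * (4 * (a : ZMod p))⁻¹))
      (fun P _ => mem_univ _)
      (fun x _ => mem_blk_inl.2 rfl)
      (fun P hP => by
        obtain ⟨x, y⟩ := P
        have hy := mem_blk_inl.1 hP
        simp only at hy
        exact congrArg (Prod.mk x) hy.symm)
      (fun x _ => rfl)
    rw [h, card_univ, ZMod.card]
  · have h := Finset.card_nbij' (s := blk (Sum.inr t) r) (t := (univ : Finset (ZMod p)))
      (fun P => P.2)
      (fun y => (r - (t : ZMod p), y))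
      (fun P _ => mem_univ _)
      (fun y _ => mem_blk_inr.2 rfl)
      (fun P hP => by
        obtain ⟨x, y⟩ := P
        have hx := mem_blk_inr.1 hP
        simp only at hx
        exact congrArg (fun z => (z, y)) hx.symm)
      (fun y _ => rfl)
    rw [h, card_univ, ZMod.card]

/-- Every point lies in exactly one row of every column. -/
lemma blk_col_once (P : ZMod p × ZMod p) (γ : Col p) :
    (univ.filter (fun r => P ∈ blk γ r)).card = 1 := by
  obtain ⟨x, y⟩ := P
  rw [Finset.card_eq_one]
  obtain (⟨a, b⟩ | t) := γ
  · refine ⟨y - ((a : ZMod p) * x ^ 2 + b * x + b ^ 2 * (4 * (a : ZMod p))⁻¹), ?_⟩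
    ext r
    simp only [mem_filter, mem_univ, true_and, mem_singleton, mem_blk_inl]
    constructor
    · intro h; linear_combination -h
    · intro h; linear_combination -h
  · refine ⟨x + (t : ZMod p), ?_⟩
    ext r
    simp only [mem_filter, mem_univ, true_and, mem_singleton, mem_blk_inr]
    constructor
    · intro h; linear_combination -h
    · intro h; linear_combination -h

/-- Every pair of distinct points lies in exactly `p - 1` cells. -/
lemma blk_pair (hodd : p ≠ 2) {P1 P2 : ZMod p × ZMod p} (hne : P1 ≠ P2) :
    (univ.filter (fun z : ZMod p × Col p =>
      P1 ∈ blk z.2 z.1 ∧ P2 ∈ blk z.2 z.1)).card = p - 1 := by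
  obtain ⟨x1, y1⟩ := P1
  obtain ⟨x2, y2⟩ := P2
  have hcard : Fintype.card (ZMod p)ˣ = p - 1 := by
    rw [Fintype.card_units, ZMod.card]
  rcases eq_or_ne x1 x2 with rfl | hx
  · -- same first coordinate: only the vertical columns contain the pair
    have hy : y1 ≠ y2 := by
      intro h; exact hne (by rw [h])
    rw [← hcard, ← card_univ]
    apply Finset.card_nbij'
      (fun z : ZMod p × Col p => Sum.elim (fun _ => (1 : (ZMod p)ˣ)) id z.2)
      (fun t : (ZMod p)ˣ => (x1 + (t : ZMod p), Sum.inr t))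
    · exact fun z _ => mem_univ _
    · intro t _
      simp only [mem_coe, mem_filter, mem_univ, true_and, mem_blk_inr]
      constructor <;> ring
    · rintro ⟨r, (⟨a, b⟩ | t)⟩ hz
      · exfalso
        simp only [mem_coe, mem_filter, mem_univ, true_and, mem_blk_inl] at hz
        exact hy (hz.1.trans hz.2.symm)
      · simp only [mem_coe, mem_filter, mem_univ, true_and, mem_blk_inr] at hz
        have hr : x1 + (t : ZMod p) = r := by linear_combination hz.1
        simp only [Sum.elim_inr, id_eq]
        rw [hr]
    · intro t _; rfl
  · -- distinct first coordinates: only the parabola columns, one per `a`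
    have hd : x1 - x2 ≠ 0 := sub_ne_zero.2 hx
    have h4 : (4 : ZMod p) ≠ 0 := four_ne hodd
    set g : (ZMod p)ˣ → ZMod p :=
      fun a => ((y1 - y2) - (a : ZMod p) * (x1 ^ 2 - x2 ^ 2)) * (x1 - x2)⁻¹ with hg
    set rr : (ZMod p)ˣ → ZMod p :=
      fun a => y1 - ((a : ZMod p) * x1 ^ 2 + g a * x1 + (g a) ^ 2 * (4 * (a : ZMod p))⁻¹)
      with hrr
    rw [← hcard, ← card_univ]
    apply Finset.card_nbij'
      (fun z : ZMod p × Col p => Sum.elim (fun ab : (ZMod p)ˣ × ZMod p => ab.1) (fun _ => 1) z.2)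
      (fun a : (ZMod p)ˣ => (rr a, Sum.inl (a, g a)))
    · exact fun z _ => mem_univ _
    · intro a _
      have hga : g a * (x1 - x2) = (y1 - y2) - (a : ZMod p) * (x1 ^ 2 - x2 ^ 2) := by
        simp only [hg]
        exact inv_mul_cancel_right₀ hd _
      simp only [mem_coe, mem_filter, mem_univ, true_and, mem_blk_inl]
      constructor
      · simp only [hrr]; ring
      · simp only [hrr]
        linear_combination hga
    · rintro ⟨r, (⟨a, b⟩ | t)⟩ hz
      · simp only [mem_coe, mem_filter, mem_univ, true_and, mem_blk_inl] at hz
        obtain ⟨h1, h2⟩ := hz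
        have hga : g a * (x1 - x2) = (y1 - y2) - (a : ZMod p) * (x1 ^ 2 - x2 ^ 2) := by
          simp only [hg]
          exact inv_mul_cancel_right₀ hd _
        have hb : g a = b := by
          apply mul_right_cancel₀ hd
          linear_combination hga + h1 - h2
        have hr : rr a = r := by
          simp only [hrr, hb]
          linear_combination h1
        simp only [Sum.elim_inl]
        rw [hb, hr]
      · exfalso
        simp only [mem_coe, mem_filter, mem_univ, true_and, mem_blk_inr] at hz
        exact hx (hz.1.trans hz.2.symm)
    · intro a _; rfl

/-- Every point lies in at most `p` cells of each row. -/
lemma blk_row (hodd : p ≠ 2) (P : ZMod p × ZMod p) (r0 : ZMod p) :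
    (univ.filter (fun γ : Col p => P ∈ blk γ r0)).card ≤ p := by
  obtain ⟨x, y⟩ := P
  have h4 : (4 : ZMod p) ≠ 0 := four_ne hodd
  have hle : (univ.filter (fun γ : Col p => (x, y) ∈ blk γ r0)).card
      ≤ (univ : Finset (ZMod p)).card := by
    apply Finset.card_le_card_of_injOn
      (fun γ : Col p => Sum.elim
        (fun ab : (ZMod p)ˣ × ZMod p =>
          if y = r0 then ((ab.1 : ZMod p)) else 2 * (ab.1 : ZMod p) * x + ab.2)
        (fun _ => (0 : ZMod p)) γ)
    · exact fun γ _ => mem_univ _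
    · intro γ1 hγ1 γ2 hγ2 hF
      simp only [coe_filter, Set.mem_setOf_eq, mem_univ, true_and] at hγ1 hγ2
      rcases γ1 with (⟨a1, b1⟩ | t1) <;> rcases γ2 with (⟨a2, b2⟩ | t2) <;>
        simp only [Sum.elim_inl, Sum.elim_inr] at hF
      · -- parabola / parabola
        have k1 := (key hodd a1 b1 r0 x y).1 (mem_blk_inl.1 hγ1)
        have k2 := (key hodd a2 b2 r0 x y).1 (mem_blk_inl.1 hγ2)
        by_cases hy : y = r0
        · simp only [if_pos hy] at hF
          have ha : a1 = a2 := Units.ext hF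
          subst ha
          have e0 : y - r0 = 0 := by rw [hy, sub_self]
          rw [e0, mul_zero] at k1 k2
          have z1 : 2 * (a1 : ZMod p) * x + b1 = 0 :=
            pow_eq_zero_iff (two_ne_zero) |>.1 k1
          have z2 : 2 * (a1 : ZMod p) * x + b2 = 0 :=
            pow_eq_zero_iff (two_ne_zero) |>.1 k2
          have hb : b1 = b2 := by linear_combination z1 - z2
          rw [hb]
        · simp only [if_neg hy] at hF
          have he : y - r0 ≠ 0 := sub_ne_zero.2 hy
          have h42 : 4 * (a1 : ZMod p) * (y - r0) = 4 * (a2 : ZMod p) * (y - r0) := by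
            rw [← k1, hF, k2]
          have ha' : 4 * (a1 : ZMod p) = 4 * (a2 : ZMod p) := mul_right_cancel₀ he h42
          have ha : (a1 : ZMod p) = (a2 : ZMod p) := mul_left_cancel₀ h4 ha'
          have hb : b1 = b2 := by linear_combination hF - 2 * x * ha
          rw [Units.ext ha, hb]
      · -- parabola / vertical : impossible
        exfalso
        have k1 := (key hodd a1 b1 r0 x y).1 (mem_blk_inl.1 hγ1)
        by_cases hy : y = r0
        · simp only [if_pos hy] at hF
          exact a1.ne_zero hF
        · simp only [if_neg hy] at hF
          rw [hF] at k1
          have : (0 : ZMod p) ^ 2 = 0 := by ring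
          rw [this] at k1
          exact (mul_ne_zero (mul_ne_zero h4 a1.ne_zero) (sub_ne_zero.2 hy)) k1.symm
      · -- vertical / parabola : impossible
        exfalso
        have k2 := (key hodd a2 b2 r0 x y).1 (mem_blk_inl.1 hγ2)
        by_cases hy : y = r0
        · simp only [if_pos hy] at hF
          exact a2.ne_zero hF.symm
        · simp only [if_neg hy] at hF
          rw [← hF] at k2
          have : (0 : ZMod p) ^ 2 = 0 := by ring
          rw [this] at k2
          exact (mul_ne_zero (mul_ne_zero h4 a2.ne_zero) (sub_ne_zero.2 hy)) k2.symm
      · -- vertical / vertical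
        have e1 := mem_blk_inr.1 hγ1
        have e2 := mem_blk_inr.1 hγ2
        simp only at e1 e2
        have : (t1 : ZMod p) = (t2 : ZMod p) := by linear_combination e1 - e2
        rw [Units.ext this]
  calc (univ.filter (fun γ : Col p => (x, y) ∈ blk γ r0)).card
      ≤ (univ : Finset (ZMod p)).card := hle
    _ = p := by rw [card_univ, ZMod.card]

lemma card_filter_equiv {α β : Type*} [Fintype α] [Fintype β] (e : α ≃ β)
    (P : α → Prop) (Q : β → Prop) [DecidablePred P] [DecidablePred Q]
    (h : ∀ a, P a ↔ Q (e a)) :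
    (univ.filter P).card = (univ.filter Q).card := by
  rw [← Fintype.card_subtype, ← Fintype.card_subtype]
  exact Fintype.card_congr (e.subtypeEquiv h)

lemma arith {n : ℕ} (h : 1 ≤ n) : (n - 1) * n + (n - 1) = n * n - 1 := by
  obtain ⟨q, rfl⟩ := Nat.exists_eq_add_of_le h
  simp only [Nat.add_sub_cancel_left]
  have : (1 + q) * (1 + q) = (q * (1 + q) + q) + 1 := by ring
  omega

end GBTD16

/-- For every odd prime `p`, there exists a GBTD(p, p). -/
theorem stmt_16 (p : ℕ) (hp : p.Prime) (hodd : p ≠ 2) :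
    ∃ A : Fin p → Fin (p * p - 1) → Finset (Fin (p * p)), IsGBTD p p A := by
  haveI : Fact p.Prime := ⟨hp⟩
  have cardK : Fintype.card (ZMod p) = p := ZMod.card p
  have cardpts : Fintype.card (ZMod p × ZMod p) = p * p := by
    rw [Fintype.card_prod, cardK]
  have cardcol : Fintype.card (GBTD16.Col p) = p * p - 1 := by
    rw [Fintype.card_sum, Fintype.card_prod, Fintype.card_units, cardK]
    exact GBTD16.arith hp.pos
  let ptE : (ZMod p × ZMod p) ≃ Fin (p * p) := Fintype.equivFinOfCardEq cardpts
  let colE : GBTD16.Col p ≃ Fin (p * p - 1) := Fintype.equivFinOfCardEq cardcol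
  let rowE : ZMod p ≃ Fin p := Fintype.equivFinOfCardEq cardK
  refine ⟨fun i j => (GBTD16.blk (colE.symm j) (rowE.symm i)).map ptE.toEmbedding,
    ?_, ?_, ?_, ?_⟩
  · intro i j
    rw [Finset.card_map]
    exact GBTD16.card_blk _ _
  · intro z w hzw
    have hne : ptE.symm z ≠ ptE.symm w := ptE.symm.injective.ne hzw
    exact (GBTD16.card_filter_equiv (Equiv.prodCongr rowE.symm colE.symm) _
      (fun rg : ZMod p × GBTD16.Col p =>
        ptE.symm z ∈ GBTD16.blk rg.2 rg.1 ∧ ptE.symm w ∈ GBTD16.blk rg.2 rg.1)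
      (fun ij => by
        simp [Finset.mem_map_equiv, Equiv.prodCongr_apply, Prod.map_fst,
          Prod.map_snd])).trans (GBTD16.blk_pair hodd hne)
  · intro z j
    exact (GBTD16.card_filter_equiv rowE.symm _
      (fun r : ZMod p => ptE.symm z ∈ GBTD16.blk (colE.symm j) r)
      (fun i => by simp [Finset.mem_map_equiv])).trans (GBTD16.blk_col_once _ _)
  · intro z i
    exact (GBTD16.card_filter_equiv colE.symm _
      (fun g : GBTD16.Col p => ptE.symm z ∈ GBTD16.blk g (rowE.symm i))
      (fun j => by simp [Finset.mem_map_equiv])).trans_le (GBTD16.blk_row hodd _ _)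
end
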